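/- Let k be a cubic field and let c be a nonzero ideal of Z_k dividing 2*Z_k. Then the index z_k(c) = [Z_c : Z_c[N]] equals 1 if there exists beta in Z_k with N_{k/QQ}(beta) a square in QQ and beta ≡ -1 (mod c^2), and equals 2 otherwise. In particular, z_k(2*Z_k) = 2. -/

import Mathlib

set_option maxHeartbeats 1000000
set_option synthInstance.maxHeartbeats 400000

open NumberField

/-- The subgroup `Z_c[N] ≤ Z_c = (𝓞 k / c²)ˣ` of classes having a lift to `𝓞 k`
whose norm down to `ℚ` is a square.  The index `z_k(c) = [Z_c : Z_c[N]]` is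
`(squareNormLift c).index`. -/
noncomputable def squareNormLift {k : Type*} [Field k] [NumberField k]
    (c : Ideal (𝓞 k)) : Subgroup ((𝓞 k ⧸ c ^ 2)ˣ) where
  carrier := {u | ∃ β : 𝓞 k, Ideal.Quotient.mk (c ^ 2) β = (u : 𝓞 k ⧸ c ^ 2) ∧
      IsSquare (Algebra.norm ℚ (algebraMap (𝓞 k) k β))}
  one_mem' := ⟨1, by simp, by simp⟩
  mul_mem' := by
    rintro u v ⟨β, hβ, sβ⟩ ⟨γ, hγ, sγ⟩
    refine ⟨β * γ, ?_, ?_⟩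
    · rw [map_mul, hβ, hγ, Units.val_mul]
    · rw [map_mul, map_mul]
      exact sβ.mul sγ
  inv_mem' := by
    rintro u ⟨β, hβ, sβ⟩
    obtain ⟨γ, hγ⟩ := Ideal.Quotient.mk_surjective ((u⁻¹ : (𝓞 k ⧸ c ^ 2)ˣ) : 𝓞 k ⧸ c ^ 2)
    refine ⟨β * γ ^ 2, ?_, ?_⟩
    · rw [map_mul, map_pow, hβ, hγ, ← Units.val_pow_eq_pow_val, ← Units.val_mul]
      congr 1
      group
    · rw [map_mul, map_mul, map_pow, map_pow]
      exact sβ.mul ⟨Algebra.norm ℚ (algebraMap (𝓞 k) k γ), (sq _)⟩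

section AuxLemmas

variable {k : Type*} [Field k] [NumberField k]

/-- Membership in `squareNormLift` unfolded. -/
private lemma mem_squareNormLift_iff (c : Ideal (𝓞 k)) (u : (𝓞 k ⧸ c ^ 2)ˣ) :
    u ∈ squareNormLift c ↔
      ∃ β : 𝓞 k, Ideal.Quotient.mk (c ^ 2) β = (u : 𝓞 k ⧸ c ^ 2) ∧
        IsSquare (Algebra.norm ℚ (algebraMap (𝓞 k) k β)) := Iff.rfl

/-- The norm of an algebraic integer, modulo `N`, only depends on the element modulo `N`. -/
private lemma norm_mod (N : ℕ) (α w : 𝓞 k) :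
    ((Algebra.norm ℤ (α + (N : 𝓞 k) * w) : ZMod N)) = ((Algebra.norm ℤ α : ZMod N)) := by
  classical
  let b := Module.Free.chooseBasis ℤ (𝓞 k)
  rw [Algebra.norm_eq_matrix_det b, Algebra.norm_eq_matrix_det b]
  have key : ∀ M : Matrix (Module.Free.ChooseBasisIndex ℤ (𝓞 k))
      (Module.Free.ChooseBasisIndex ℤ (𝓞 k)) ℤ,
      ((M.det : ℤ) : ZMod N) = (M.map (Int.castRingHom (ZMod N))).det :=
    fun M => RingHom.map_det (Int.castRingHom (ZMod N)) M
  rw [key, key]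
  congr 1
  ext i j
  have hw : (N : 𝓞 k) * w = (N : ℤ) • w := by rw [zsmul_eq_mul]; norm_num
  rw [hw, map_add, map_smul]
  simp only [Matrix.map_apply, Matrix.add_apply, Matrix.smul_apply, smul_eq_mul]
  push_cast
  simp

/-- Every algebraic integer divides (the image of) its norm. -/
private lemma dvd_algebraMap_norm (β : 𝓞 k) :
    β ∣ algebraMap ℤ (𝓞 k) (Algebra.norm ℤ β) := by
  classical
  set f : Module.End ℤ (𝓞 k) := Algebra.lmul ℤ (𝓞 k) β with hf
  have hev : Polynomial.aeval β f.charpoly = 0 := by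
    have h : Polynomial.aeval (Algebra.lmul ℤ (𝓞 k) β) f.charpoly
        = Algebra.lmul ℤ (𝓞 k) (Polynomial.aeval β f.charpoly) :=
      Polynomial.aeval_algHom_apply (Algebra.lmul ℤ (𝓞 k)) β f.charpoly
    rw [← hf, LinearMap.aeval_self_charpoly] at h
    have := congrArg (fun g : Module.End ℤ (𝓞 k) => g 1) h
    simpa using this.symm
  have hdvd0 : β ∣ algebraMap ℤ (𝓞 k) (f.charpoly.coeff 0) := by
    have hsplit : f.charpoly.divX * Polynomial.X + Polynomial.C (f.charpoly.coeff 0)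
        = f.charpoly := Polynomial.divX_mul_X_add _
    have := congrArg (Polynomial.aeval β) hsplit
    rw [hev, map_add, map_mul, Polynomial.aeval_X, Polynomial.aeval_C] at this
    exact ⟨-(Polynomial.aeval β f.charpoly.divX), by linear_combination this⟩
  have hnorm : Algebra.norm ℤ β = (-1) ^ Module.finrank ℤ (𝓞 k) * f.charpoly.coeff 0 := by
    rw [Algebra.norm_apply, ← hf, LinearMap.det_eq_sign_charpoly_coeff]
  rw [hnorm, map_mul]
  exact hdvd0.mul_left _

/-- The rational norm of an algebraic integer is a rational square iff the integral norm is
an integer square. -/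
private lemma isSquare_norm_iff (x : 𝓞 k) :
    IsSquare (Algebra.norm ℚ (algebraMap (𝓞 k) k x)) ↔ IsSquare (Algebra.norm ℤ x) := by
  rw [show algebraMap (𝓞 k) k x = (x : k) from rfl, ← Algebra.coe_norm_int,
    Rat.isSquare_intCast_iff]

private lemma span4_le {c : Ideal (𝓞 k)} (hc : c ∣ Ideal.span {(2 : 𝓞 k)}) :
    Ideal.span {(4 : 𝓞 k)} ≤ c ^ 2 := by
  have h2c : Ideal.span {(2 : 𝓞 k)} ≤ c := Ideal.le_of_dvd hc
  have h4 : Ideal.span {(4 : 𝓞 k)} = Ideal.span {(2 : 𝓞 k)} * Ideal.span {(2 : 𝓞 k)} := by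
    rw [Ideal.span_singleton_mul_span_singleton]; norm_num
  rw [h4, pow_two]
  exact Ideal.mul_mono h2c h2c

/-- Every class in `(𝓞 k ⧸ c²)ˣ` has a lift of odd norm. -/
private lemma exists_lift_norm_odd (c : Ideal (𝓞 k)) (hc0 : c ≠ ⊥)
    (u : (𝓞 k ⧸ c ^ 2)ˣ) :
    ∃ β : 𝓞 k, Ideal.Quotient.mk (c ^ 2) β = (u : 𝓞 k ⧸ c ^ 2) ∧
      ¬ (2 : ℤ) ∣ Algebra.norm ℤ β := by
  classical
  have hc2 : c ^ 2 ≠ ⊥ := by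
    rw [pow_two, Ne, Ideal.mul_eq_bot]
    simp [hc0]
  have h40 : (4 : 𝓞 k) ≠ 0 := by norm_num
  haveI : Fintype (𝓞 k ⧸ Ideal.span {(4 : 𝓞 k)}) :=
    @Fintype.ofFinite _ (Ideal.finiteQuotientOfFreeOfNeBot _ (by simpa [Ideal.span_singleton_eq_bot] using h40))
  haveI : Fintype (𝓞 k ⧸ c ^ 2) := @Fintype.ofFinite _ (Ideal.finiteQuotientOfFreeOfNeBot _ hc2)
  set π := Ideal.Quotient.mk (c ^ 2) with hπ
  set ρ := Ideal.Quotient.mk (Ideal.span {(4 : 𝓞 k)}) with hρ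
  obtain ⟨x, hx⟩ := Ideal.Quotient.mk_surjective (u : 𝓞 k ⧸ c ^ 2)
  -- pigeonhole: powers of ρ x repeat
  obtain ⟨i, j, hij, hpow⟩ : ∃ i j : ℕ, i < j ∧ ρ x ^ i = ρ x ^ j := by
    obtain ⟨a, b, hab, he⟩ := Finite.exists_ne_map_eq_of_infinite (fun j : ℕ => ρ x ^ j)
    rcases lt_or_gt_of_ne hab with h | h
    · exact ⟨a, b, h, he⟩
    · exact ⟨b, a, h, he.symm⟩
  set d := j - i with hd
  have hd1 : 1 ≤ d := by omega
  have C : ∀ s, i ≤ s → ρ x ^ (s + d) = ρ x ^ s := by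
    intro s hs
    have h1 : s + d = (s - i) + j := by omega
    have h2 : s = (s - i) + i := by omega
    rw [h1, pow_add, ← hpow, ← pow_add, ← h2]
  have C' : ∀ t s, i ≤ s → ρ x ^ (s + t * d) = ρ x ^ s := by
    intro t
    induction t with
    | zero => simp
    | succ t ih =>
      intro s hs
      have h1 : s + (t + 1) * d = (s + t * d) + d := by ring
      rw [h1, C _ (by omega), ih s hs]
  set e := (i + 1) * d with he
  have he0 : 0 < e := Nat.mul_pos (by omega) (by omega)
  have hei : i ≤ e := by
    have := Nat.le_mul_of_pos_right (i + 1) (show 0 < d by omega)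
    omega
  have hee : ρ x ^ e * ρ x ^ e = ρ x ^ e := by
    rw [← pow_add]
    have h1 : e + e = e + (i + 1) * d := by rw [he]
    rw [h1, C' (i + 1) e hei]
  have hcard1 : 1 ≤ Nat.card (𝓞 k ⧸ c ^ 2)ˣ :=
    Nat.one_le_iff_ne_zero.mpr (Nat.card_ne_zero.mpr ⟨inferInstance, inferInstance⟩)
  set m := e * Nat.card (𝓞 k ⧸ c ^ 2)ˣ with hm
  have hm1 : 1 ≤ m := Nat.one_le_iff_ne_zero.mpr (by positivity)
  have hme : ρ x ^ m = ρ x ^ e := by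
    obtain ⟨n', hn'⟩ : ∃ n', Nat.card (𝓞 k ⧸ c ^ 2)ˣ = n' + 1 :=
      ⟨Nat.card (𝓞 k ⧸ c ^ 2)ˣ - 1, by omega⟩
    have h1 : m = e + ((i + 1) * n') * d := by rw [hm, hn', he]; ring
    rw [h1, C' _ e hei]
  set y := x ^ m with hy
  have hum : u ^ m = 1 := by
    rw [hm, pow_mul', pow_card_eq_one', one_pow]
  have hym : π y = 1 := by
    rw [hy, map_pow, hx, ← Units.val_pow_eq_pow_val, hum, Units.val_one]
  refine ⟨x * y + 1 - y, ?_, ?_⟩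
  · rw [map_sub, map_add, map_mul, hym, hx, map_one, mul_one]
    ring
  · -- invertibility mod 4 gives odd norm
    have hρβδ : ρ ((x * y + 1 - y) * (x ^ (m - 1) * y + 1 - y)) = 1 := by
      have hPP : ρ y * ρ y = ρ y := by
        rw [hy, map_pow, hme]; exact hee
      have hab : ρ x * ρ (x ^ (m - 1)) = ρ y := by
        rw [hy, map_pow, map_pow, ← pow_succ']
        congr 1
        omega
      simp only [map_mul, map_add, map_sub, map_one]
      set a := ρ x
      set b := ρ (x ^ (m - 1))
      set P := ρ y
      linear_combination (P ^ 2) * hab + (P + 2 - a - b) * hPP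
    obtain ⟨w, hw⟩ : (4 : 𝓞 k) ∣ (x * y + 1 - y) * (x ^ (m - 1) * y + 1 - y) - 1 := by
      rw [← Ideal.mem_span_singleton]
      have := Ideal.Quotient.eq.mp (hρβδ.trans (map_one ρ).symm)
      simpa using this
    intro h2dvd
    have hnm : ((Algebra.norm ℤ ((x * y + 1 - y) * (x ^ (m - 1) * y + 1 - y)) : ℤ) : ZMod 2)
        = ((Algebra.norm ℤ (1 : 𝓞 k) : ℤ) : ZMod 2) := by
      have hrw : (x * y + 1 - y) * (x ^ (m - 1) * y + 1 - y)
          = 1 + ((2 : ℕ) : 𝓞 k) * (2 * w) := by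
        push_cast
        linear_combination hw
      rw [hrw]
      exact norm_mod 2 1 (2 * w)
    rw [map_mul, Int.cast_mul, map_one] at hnm
    have h0 : ((Algebra.norm ℤ (x * y + 1 - y) : ℤ) : ZMod 2) = 0 :=
      (ZMod.intCast_zmod_eq_zero_iff_dvd _ 2).mpr (by exact_mod_cast h2dvd)
    rw [h0, zero_mul] at hnm
    simp at hnm

/-- Key step: every class or its negative lies in `Z_c[N]`. -/
private lemma mem_or_neg_mem (h3 : Module.finrank ℚ k = 3) (c : Ideal (𝓞 k))
    (hc0 : c ≠ ⊥) (hc : c ∣ Ideal.span {(2 : 𝓞 k)}) (u : (𝓞 k ⧸ c ^ 2)ˣ) :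
    u ∈ squareNormLift c ∨ -u ∈ squareNormLift c := by
  classical
  obtain ⟨β, hβ, hodd⟩ := exists_lift_norm_odd c hc0 u
  set π := Ideal.Quotient.mk (c ^ 2) with hπdef
  set n := Algebra.norm ℤ β with hn
  obtain ⟨γ, hγ⟩ := dvd_algebraMap_norm β
  have hrank : Module.finrank ℤ (𝓞 k) = 3 := (RingOfIntegers.rank k).trans h3
  have hne : n ≠ 0 := fun h => hodd (h ▸ dvd_zero 2)
  have hnormγ : Algebra.norm ℤ γ = n ^ 2 := by
    have h1 : Algebra.norm ℤ (algebraMap ℤ (𝓞 k) n) = n ^ 3 := by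
      rw [Algebra.norm_algebraMap_of_basis (Module.Free.chooseBasis ℤ (𝓞 k)),
        ← Module.finrank_eq_card_chooseBasisIndex, hrank]
    rw [hγ, map_mul, ← hn] at h1
    exact mul_left_cancel₀ hne (h1.trans (by ring))
  have hsq : IsSquare (Algebra.norm ℚ (algebraMap (𝓞 k) k γ)) := by
    rw [isSquare_norm_iff, hnormγ]
    exact ⟨n, sq n⟩
  have h4 : (4 : 𝓞 k) ∈ c ^ 2 := span4_le hc (Ideal.mem_span_singleton_self _)
  have h14 : (4 : ℤ) ∣ n - 1 ∨ (4 : ℤ) ∣ n + 1 := by omega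
  have hπn : π (algebraMap ℤ (𝓞 k) n) = (u : 𝓞 k ⧸ c ^ 2) * π γ := by
    rw [hγ, map_mul, hβ]
  rcases h14 with h1 | h1
  · left
    have hone : π (algebraMap ℤ (𝓞 k) n) = 1 := by
      obtain ⟨t, ht⟩ := h1
      have hsub : algebraMap ℤ (𝓞 k) n - 1 = (4 : 𝓞 k) * algebraMap ℤ (𝓞 k) t := by
        have : algebraMap ℤ (𝓞 k) (n - 1) = algebraMap ℤ (𝓞 k) (4 * t) := by rw [ht]
        rw [map_sub, map_mul, map_one] at this
        simpa using this
      have hmem : algebraMap ℤ (𝓞 k) n - 1 ∈ c ^ 2 := by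
        rw [hsub]; exact Ideal.mul_mem_right _ _ h4
      have := Ideal.Quotient.eq.mpr hmem
      simpa using this
    have hγπ : π γ = ((u⁻¹ : (𝓞 k ⧸ c ^ 2)ˣ) : 𝓞 k ⧸ c ^ 2) := by
      have h2 : (u : 𝓞 k ⧸ c ^ 2) * π γ = 1 := by rw [← hπn, hone]
      calc π γ = ↑u⁻¹ * ((u : 𝓞 k ⧸ c ^ 2) * π γ) := by
            rw [← mul_assoc, Units.inv_mul, one_mul]
        _ = ↑u⁻¹ := by rw [h2, mul_one]
    rw [← Subgroup.inv_mem_iff]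
    exact (mem_squareNormLift_iff c u⁻¹).mpr ⟨γ, hγπ, hsq⟩
  · right
    have hone : π (algebraMap ℤ (𝓞 k) n) = -1 := by
      obtain ⟨t, ht⟩ := h1
      have hsub : algebraMap ℤ (𝓞 k) n - (-1) = (4 : 𝓞 k) * algebraMap ℤ (𝓞 k) t := by
        have : algebraMap ℤ (𝓞 k) (n + 1) = algebraMap ℤ (𝓞 k) (4 * t) := by rw [ht]
        rw [map_add, map_mul, map_one] at this
        have h4' : (algebraMap ℤ (𝓞 k)) (4 : ℤ) = 4 := by norm_num
        rw [h4'] at this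
        linear_combination this
      have hmem : algebraMap ℤ (𝓞 k) n - (-1) ∈ c ^ 2 := by
        rw [hsub]; exact Ideal.mul_mem_right _ _ h4
      have := Ideal.Quotient.eq.mpr hmem
      simpa using this
    have hγπ : π γ = (((-u)⁻¹ : (𝓞 k ⧸ c ^ 2)ˣ) : 𝓞 k ⧸ c ^ 2) := by
      have h2 : (u : 𝓞 k ⧸ c ^ 2) * π γ = -1 := by rw [← hπn, hone]
      have h3' : π γ = -(↑u⁻¹ : 𝓞 k ⧸ c ^ 2) := by
        calc π γ = ↑u⁻¹ * ((u : 𝓞 k ⧸ c ^ 2) * π γ) := by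
              rw [← mul_assoc, Units.inv_mul, one_mul]
          _ = -(↑u⁻¹) := by rw [h2, mul_neg_one]
      rw [h3', inv_neg, Units.val_neg]
    rw [← Subgroup.inv_mem_iff]
    exact (mem_squareNormLift_iff c (-u)⁻¹).mpr ⟨γ, hγπ, hsq⟩

private lemma index_one (h3 : Module.finrank ℚ k = 3) (c : Ideal (𝓞 k))
    (hc0 : c ≠ ⊥) (hc : c ∣ Ideal.span {(2 : 𝓞 k)})
    (hneg : (-1 : (𝓞 k ⧸ c ^ 2)ˣ) ∈ squareNormLift c) :
    (squareNormLift c).index = 1 := by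
  rw [Subgroup.index_eq_one]
  rw [eq_top_iff]
  intro u _
  rcases mem_or_neg_mem h3 c hc0 hc u with h | h
  · exact h
  · have := (squareNormLift c).mul_mem hneg h
    simpa using this

private lemma index_two (h3 : Module.finrank ℚ k = 3) (c : Ideal (𝓞 k))
    (hc0 : c ≠ ⊥) (hc : c ∣ Ideal.span {(2 : 𝓞 k)})
    (hneg : (-1 : (𝓞 k ⧸ c ^ 2)ˣ) ∉ squareNormLift c) :
    (squareNormLift c).index = 2 := by
  rw [Subgroup.index_eq_two_iff]
  refine ⟨-1, fun b => ?_⟩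
  have hb1 : b * -1 = -b := by rw [mul_neg_one]
  rcases mem_or_neg_mem h3 c hc0 hc b with h | h
  · refine Or.inr ⟨h, fun hA => hneg ?_⟩
    rw [hb1] at hA
    have := (squareNormLift c).mul_mem ((squareNormLift c).inv_mem h) hA
    simpa using this
  · refine Or.inl ⟨by rw [hb1]; exact h, fun hB => hneg ?_⟩
    have := (squareNormLift c).mul_mem ((squareNormLift c).inv_mem hB) h
    simpa using this

private lemma neg_one_mem_iff (c : Ideal (𝓞 k)) :
    ((-1 : (𝓞 k ⧸ c ^ 2)ˣ) ∈ squareNormLift c) ↔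
      ∃ β : 𝓞 k, IsSquare (Algebra.norm ℚ (algebraMap (𝓞 k) k β)) ∧ β + 1 ∈ c ^ 2 := by
  rw [mem_squareNormLift_iff]
  constructor
  · rintro ⟨β, hβ, hsq⟩
    refine ⟨β, hsq, ?_⟩
    rw [← Ideal.Quotient.eq_zero_iff_mem, map_add, hβ, map_one]
    simp
  · rintro ⟨β, hsq, hmem⟩
    refine ⟨β, ?_, hsq⟩
    have h0 := Ideal.Quotient.eq_zero_iff_mem.mpr hmem
    rw [map_add, map_one] at h0
    have : Ideal.Quotient.mk (c ^ 2) β = -1 := by linear_combination h0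
    rw [this]
    simp

end AuxLemmas

/-- Let `k` be a cubic field and `c` a nonzero ideal of `𝓞 k` dividing
`2 𝓞 k`.  Then `z_k(c) = [Z_c : Z_c[N]]` equals `1` if there is `β ∈ 𝓞 k` of square
norm with `β ≡ -1 (mod c²)`, and equals `2` otherwise.  In particular
`z_k(2 𝓞 k) = 2`. -/
theorem statement4 (k : Type*) [Field k] [NumberField k]
    (h3 : Module.finrank ℚ k = 3)
    (c : Ideal (𝓞 k)) (hc0 : c ≠ ⊥) (hc : c ∣ Ideal.span {(2 : 𝓞 k)}) :
    ((∃ β : 𝓞 k, IsSquare (Algebra.norm ℚ (algebraMap (𝓞 k) k β)) ∧ β + 1 ∈ c ^ 2) →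
        (squareNormLift c).index = 1) ∧
    ((¬ ∃ β : 𝓞 k, IsSquare (Algebra.norm ℚ (algebraMap (𝓞 k) k β)) ∧ β + 1 ∈ c ^ 2) →
        (squareNormLift c).index = 2) ∧
    (squareNormLift (Ideal.span {(2 : 𝓞 k)})).index = 2 := by
  refine ⟨fun h => index_one h3 c hc0 hc ((neg_one_mem_iff c).mpr h),
    fun h => index_two h3 c hc0 hc (fun hm => h ((neg_one_mem_iff c).mp hm)), ?_⟩
  have h20 : Ideal.span {(2 : 𝓞 k)} ≠ ⊥ := by
    rw [Ne, Ideal.span_singleton_eq_bot]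
    norm_num
  apply index_two h3 _ h20 dvd_rfl
  rw [neg_one_mem_iff]
  rintro ⟨β, hsq, hmem⟩
  have hsp : (Ideal.span {(2 : 𝓞 k)}) ^ 2 = Ideal.span {(4 : 𝓞 k)} := by
    rw [pow_two, Ideal.span_singleton_mul_span_singleton]; norm_num
  rw [hsp, Ideal.mem_span_singleton] at hmem
  obtain ⟨w, hw⟩ := hmem
  have hβ : β = -1 + ((4 : ℕ) : 𝓞 k) * w := by push_cast; linear_combination hw
  have h4' : ((Algebra.norm ℤ β : ℤ) : ZMod 4) = ((Algebra.norm ℤ (-1 : 𝓞 k) : ℤ) : ZMod 4) := by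
    rw [hβ]
    exact norm_mod 4 (-1) w
  have hrank : Module.finrank ℤ (𝓞 k) = 3 := (RingOfIntegers.rank k).trans h3
  have hneg1 : Algebra.norm ℤ (-1 : 𝓞 k) = -1 := by
    have hone : (-1 : 𝓞 k) = algebraMap ℤ (𝓞 k) (-1) := by norm_num
    rw [hone, Algebra.norm_algebraMap_of_basis (Module.Free.chooseBasis ℤ (𝓞 k)),
      ← Module.finrank_eq_card_chooseBasisIndex, hrank]
    norm_num
  obtain ⟨s, hs⟩ := (isSquare_norm_iff β).mp hsq
  rw [hs, hneg1] at h4'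
  have hcontra : ∀ a : ZMod 4, a * a ≠ -1 := by decide
  exact hcontra (s : ZMod 4) (by push_cast at h4'; exact_mod_cast h4')
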